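/- arXiv:2310.18750 — 6 statements merged into one kernel-verified Lean document; each statement's English description precedes it below -/
import Mathlib

section
/- A priori MCC-KF covariance recursion: with K_p^λ = λ F P Hᵀ (R_e^λ)⁻¹ where R_e^λ = λ H P Hᵀ + R, the Joseph-form update F[(I − K^λ H) P (I − K^λ H)ᵀ + K^λ R (K^λ)ᵀ]Fᵀ + G Q Gᵀ (with K^λ = λ P Hᵀ (R_e^λ)⁻¹) equals F P Fᵀ + G Q Gᵀ − K_p^λ (H P Hᵀ + (2λ⁻¹ − 1) R) (K_p^λ)ᵀ. -/
open Matrix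

private lemma posSemidef_smul {m : ℕ} {A : Matrix (Fin m) (Fin m) ℝ}
    (hA : A.PosSemidef) {c : ℝ} (hc : 0 ≤ c) : (c • A).PosSemidef := by
  constructor
  · unfold Matrix.IsHermitian
    rw [conjTranspose_smul, hA.1]
    simp
  · intro x
    calc (0:ℝ) ≤ c * (x.sum fun i xi => x.sum fun j xj => star xi * A i j * xj) :=
          mul_nonneg hc (hA.2 x)
      _ = _ := by
          simp only [Finsupp.sum, Finset.mul_sum, Matrix.smul_apply, smul_eq_mul]
          exact Finset.sum_congr rfl fun _ _ => Finset.sum_congr rfl fun _ _ => by ring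

theorem apriori_mcckf_cov_recursion {n m q : ℕ}
    (P F : Matrix (Fin n) (Fin n) ℝ) (R : Matrix (Fin m) (Fin m) ℝ)
    (Q : Matrix (Fin q) (Fin q) ℝ) (H : Matrix (Fin m) (Fin n) ℝ)
    (G : Matrix (Fin n) (Fin q) ℝ) (lam : ℝ)
    (hP : P.PosDef) (hR : R.PosDef) (hQ : Q.IsSymm) (hlam : 0 < lam)
    (Re Klam Kplam : Matrix _ _ ℝ)
    (hRe : Re = lam • (H * P * Hᵀ) + R)
    (hKlam : Klam = lam • (P * Hᵀ * Re⁻¹))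
    (hKplam : Kplam = F * Klam) :
    F * ((1 - Klam * H) * P * (1 - Klam * H)ᵀ + Klam * R * Klamᵀ) * Fᵀ + G * Q * Gᵀ
      = F * P * Fᵀ + G * Q * Gᵀ
        - Kplam * (H * P * Hᵀ + (2 * lam⁻¹ - 1) • R) * Kplamᵀ := by
  -- basic symmetry facts
  have hPT : Pᵀ = P := by
    rw [← conjTranspose_eq_transpose_of_trivial]; exact hP.isHermitian
  have hRT : Rᵀ = R := by
    rw [← conjTranspose_eq_transpose_of_trivial]; exact hR.isHermitian
  -- Re is positive definite, hence invertible, and symmetric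
  have hRePD : Re.PosDef := by
    rw [hRe]
    have h1 : (H * P * Hᵀ).PosSemidef := by
      have := hP.posSemidef.mul_mul_conjTranspose_same H
      rwa [conjTranspose_eq_transpose_of_trivial] at this
    exact Matrix.PosDef.posSemidef_add (posSemidef_smul h1 hlam.le) hR
  have hReT : Reᵀ = Re := by
    rw [hRe]; simp [transpose_add, transpose_smul, transpose_mul, hPT, hRT, Matrix.mul_assoc]
  have hReDet : IsUnit Re.det := hRePD.det_pos.ne'.isUnit
  have hReInv : Re⁻¹ * Re = 1 := nonsing_inv_mul Re hReDet
  have hReInvT : Re⁻¹ᵀ = Re⁻¹ := by rw [transpose_nonsing_inv, hReT]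
  -- key identity: Klam * Re = lam • (P * Hᵀ)
  have hKRe : Klam * Re = lam • (P * Hᵀ) := by
    rw [hKlam, Matrix.smul_mul, Matrix.mul_assoc, hReInv, Matrix.mul_one]
  -- symmetry of Klam * H * P
  have hKsym : Klam * (H * P) = P * Hᵀ * Klamᵀ := by
    rw [hKlam]
    simp [transpose_smul, transpose_mul, hReInvT, hPT, Matrix.mul_assoc,
      Matrix.smul_mul, Matrix.mul_smul]
  -- Klam * (H*P*Hᵀ) * Klamᵀ expressed via Re
  have hlamne : lam ≠ 0 := hlam.ne'
  have hKReK : Klam * Re * Klamᵀ = lam • (P * Hᵀ * Klamᵀ) := by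
    rw [hKRe, Matrix.smul_mul]
  have hKHPH : Klam * (H * P * Hᵀ) * Klamᵀ
      = P * Hᵀ * Klamᵀ - lam⁻¹ • (Klam * R * Klamᵀ) := by
    have expand : Klam * Re * Klamᵀ
        = lam • (Klam * (H * P * Hᵀ) * Klamᵀ) + Klam * R * Klamᵀ := by
      rw [hRe, Matrix.mul_add, Matrix.add_mul, Matrix.mul_smul, Matrix.smul_mul]
    have h2 : lam • (Klam * (H * P * Hᵀ) * Klamᵀ)
        = lam • (P * Hᵀ * Klamᵀ) - Klam * R * Klamᵀ := by
      rw [← hKReK, expand]; abel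
    have := congrArg (fun M => lam⁻¹ • M) h2
    simpa [smul_smul, inv_mul_cancel₀ hlamne, smul_sub] using this
  -- the inner identity
  have inner : (1 - Klam * H) * P * (1 - Klam * H)ᵀ + Klam * R * Klamᵀ
      = P - Klam * (H * P * Hᵀ + (2 * lam⁻¹ - 1) • R) * Klamᵀ := by
    have hT : (1 - Klam * H)ᵀ = 1 - Hᵀ * Klamᵀ := by
      rw [transpose_sub, transpose_one, transpose_mul]
    rw [hT]
    simp only [Matrix.sub_mul, Matrix.mul_sub, Matrix.mul_one, Matrix.one_mul,
      Matrix.mul_add, Matrix.add_mul]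
    have e1 : Klam * H * P = P * Hᵀ * Klamᵀ := by rw [Matrix.mul_assoc, hKsym]
    have e2 : Klam * H * P * (Hᵀ * Klamᵀ) = Klam * (H * P * Hᵀ) * Klamᵀ := by
      simp [Matrix.mul_assoc]
    have e3 : P * (Hᵀ * Klamᵀ) = P * Hᵀ * Klamᵀ := by rw [Matrix.mul_assoc]
    have e4 : Klam * ((2 * lam⁻¹ - 1) • R) * Klamᵀ
        = (2 * lam⁻¹ - 1) • (Klam * R * Klamᵀ) := by
      rw [Matrix.mul_smul, Matrix.smul_mul]
    rw [e2, e3, e1, e4, hKHPH]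
    have : (2 * lam⁻¹ - 1) • (Klam * R * Klamᵀ)
        = (2:ℝ) • (lam⁻¹ • (Klam * R * Klamᵀ)) - Klam * R * Klamᵀ := by
      rw [sub_smul, smul_smul, one_smul]
    rw [this]
    module
  -- lift to the full identity
  rw [hKplam, transpose_mul, inner]
  rw [Matrix.mul_sub, Matrix.sub_mul]
  rw [show F * Klam * (H * P * Hᵀ + (2 * lam⁻¹ - 1) • R) * (Klamᵀ * Fᵀ)
      = F * (Klam * (H * P * Hᵀ + (2 * lam⁻¹ - 1) • R) * Klamᵀ) * Fᵀ by
    simp [Matrix.mul_assoc]]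
  abel
end

section
/- Array algorithm correctness (innovation block): if an orthogonal matrix 𝒬 maps the block pre-array A = [[R^{1/2}, √λ H S, 0], [0, F S, G Q^{1/2}]] to a block lower-triangular post-array [[X, 0, 0], [Y, Z, 0]], then X Xᵀ = λ H S Sᵀ Hᵀ + R^{1/2} R^{T/2}, i.e. X is a square root of R_e^λ = λ H P Hᵀ + R with P = S Sᵀ. -/
open Matrix

theorem array_innovation_block {n m q : ℕ}
    (S F : Matrix (Fin n) (Fin n) ℝ) (Rh : Matrix (Fin m) (Fin m) ℝ)
    (Qh : Matrix (Fin q) (Fin q) ℝ) (H : Matrix (Fin m) (Fin n) ℝ)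
    (G : Matrix (Fin n) (Fin q) ℝ) (lam : ℝ) (hlam : 0 < lam)
    (Qo : Matrix (Fin m ⊕ (Fin n ⊕ Fin q)) (Fin m ⊕ (Fin n ⊕ Fin q)) ℝ)
    (hQo : Qo * Qoᵀ = 1)
    (X : Matrix (Fin m) (Fin m) ℝ) (Y : Matrix (Fin n) (Fin m) ℝ)
    (Z : Matrix (Fin n) (Fin n) ℝ)
    (hA : (fromBlocks Rh (fromCols (Real.sqrt lam • (H * S)) 0)
            0 (fromCols (F * S) (G * Qh))) * Qo
          = fromBlocks X (fromCols 0 0) Y (fromCols Z 0)) :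
    X * Xᵀ = lam • (H * (S * Sᵀ) * Hᵀ) + Rh * Rhᵀ := by
  set A := (fromBlocks Rh (fromCols (Real.sqrt lam • (H * S)) 0)
            0 (fromCols (F * S) (G * Qh))) with hAdef
  have key : A * Aᵀ = (A * Qo) * (A * Qo)ᵀ := by
    rw [transpose_mul, Matrix.mul_assoc, ← Matrix.mul_assoc Qo, hQo,
      Matrix.one_mul]
  rw [hA] at key
  have h11 := congrArg Matrix.toBlocks₁₁ key
  simp only [hAdef, fromBlocks_transpose, transpose_fromCols, fromBlocks_multiply,
    fromCols_mul_fromRows, toBlocks_fromBlocks₁₁, transpose_zero,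
    Matrix.mul_zero, Matrix.zero_mul, add_zero, zero_add,
    transpose_smul, Matrix.smul_mul, Matrix.mul_smul, smul_smul,
    Real.mul_self_sqrt hlam.le, transpose_mul] at h11
  rw [← h11, add_comm, Matrix.mul_assoc, Matrix.mul_assoc, Matrix.mul_assoc]
end

section
/- Array algorithm correctness (gain block): under the block triangularization A 𝒬 = [[X,0,0],[Y,Z,0]] of the pre-array A = [[R^{1/2}, √λ H S, 0], [0, F S, G Q^{1/2}]], one has X Yᵀ = √λ H S Sᵀ Fᵀ; hence if X is invertible then Y = √λ F P Hᵀ X^{−T} with P = S Sᵀ. -/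
open Matrix

theorem array_gain_block {n m q : ℕ}
    (S F : Matrix (Fin n) (Fin n) ℝ) (Rh : Matrix (Fin m) (Fin m) ℝ)
    (Qh : Matrix (Fin q) (Fin q) ℝ) (H : Matrix (Fin m) (Fin n) ℝ)
    (G : Matrix (Fin n) (Fin q) ℝ) (lam : ℝ) (hlam : 0 < lam)
    (Qo : Matrix (Fin m ⊕ (Fin n ⊕ Fin q)) (Fin m ⊕ (Fin n ⊕ Fin q)) ℝ)
    (hQo : Qo * Qoᵀ = 1)
    (X : Matrix (Fin m) (Fin m) ℝ) (Y : Matrix (Fin n) (Fin m) ℝ)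
    (Z : Matrix (Fin n) (Fin n) ℝ)
    (hA : (fromBlocks Rh (fromCols (Real.sqrt lam • (H * S)) 0)
            0 (fromCols (F * S) (G * Qh))) * Qo
          = fromBlocks X (fromCols 0 0) Y (fromCols Z 0)) :
    X * Yᵀ = Real.sqrt lam • (H * (S * Sᵀ) * Fᵀ) ∧
      (IsUnit X.det → Y = Real.sqrt lam • (F * (S * Sᵀ) * Hᵀ * X⁻¹ᵀ)) := by
  set A := (fromBlocks Rh (fromCols (Real.sqrt lam • (H * S)) 0)
            0 (fromCols (F * S) (G * Qh))) with hAdef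
  set L := fromBlocks X (fromCols 0 0) Y (fromCols Z 0) with hLdef
  have h0 : A * Aᵀ = L * Lᵀ := by
    calc A * Aᵀ = (A * Qo) * (A * Qo)ᵀ := by
          rw [transpose_mul, Matrix.mul_assoc, ← Matrix.mul_assoc Qo, hQo, Matrix.one_mul]
      _ = L * Lᵀ := by rw [hA]
  have key : (A * Aᵀ).toBlocks₁₂ = (L * Lᵀ).toBlocks₁₂ := by rw [h0]
  rw [hAdef, hLdef] at key
  simp only [fromBlocks_transpose, transpose_fromCols, fromBlocks_multiply,
    fromCols_mul_fromRows, toBlocks_fromBlocks₁₂, transpose_zero, transpose_smul,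
    transpose_mul, Matrix.mul_zero, Matrix.zero_mul, zero_add, add_zero,
    Matrix.smul_mul, Matrix.mul_smul] at key
  have h1 : X * Yᵀ = Real.sqrt lam • (H * (S * Sᵀ) * Fᵀ) := by
    rw [← key]; simp only [Matrix.mul_assoc]
  refine ⟨h1, fun hX => ?_⟩
  have h2 : Yᵀ = X⁻¹ * (Real.sqrt lam • (H * (S * Sᵀ) * Fᵀ)) := by
    rw [← h1, ← Matrix.mul_assoc, Matrix.nonsing_inv_mul X hX, Matrix.one_mul]
  have h3 := congrArg Matrix.transpose h2
  rw [transpose_transpose] at h3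
  rw [h3]
  simp only [transpose_mul, transpose_smul, Matrix.mul_smul, Matrix.smul_mul,
    transpose_transpose]
  simp only [Matrix.mul_assoc]
end

section
/- Array algorithm correctness (covariance block): under A 𝒬 = [[X,0,0],[Y,Z,0]] with A = [[R^{1/2}, √λ H S, 0], [0, F S, G Q^{1/2}]], one has Y Yᵀ + Z Zᵀ = F S Sᵀ Fᵀ + G Q^{1/2} Q^{T/2} Gᵀ; consequently Z Zᵀ = F P Fᵀ + G Q Gᵀ − λ K_p R_e^λ K_pᵀ where P = S Sᵀ, Q = Q^{1/2} Q^{T/2}, R_e^λ = λ H P Hᵀ + R, K_p = F P Hᵀ (R_e^λ)⁻¹, assuming X Xᵀ = R_e^λ and X invertible. -/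
open Matrix

theorem array_covariance_block {n m q : ℕ}
    (S F : Matrix (Fin n) (Fin n) ℝ) (Rh : Matrix (Fin m) (Fin m) ℝ)
    (Qh : Matrix (Fin q) (Fin q) ℝ) (H : Matrix (Fin m) (Fin n) ℝ)
    (G : Matrix (Fin n) (Fin q) ℝ) (lam : ℝ) (hlam : 0 < lam)
    (hR : (Rh * Rhᵀ).PosDef)
    (Qo : Matrix (Fin m ⊕ (Fin n ⊕ Fin q)) (Fin m ⊕ (Fin n ⊕ Fin q)) ℝ)
    (hQo : Qo * Qoᵀ = 1)
    (X : Matrix (Fin m) (Fin m) ℝ) (Y : Matrix (Fin n) (Fin m) ℝ)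
    (Z : Matrix (Fin n) (Fin n) ℝ)
    (hA : (fromBlocks Rh (fromCols (Real.sqrt lam • (H * S)) 0)
            0 (fromCols (F * S) (G * Qh))) * Qo
          = fromBlocks X (fromCols 0 0) Y (fromCols Z 0))
    (Re : Matrix (Fin m) (Fin m) ℝ)
    (hRe : Re = lam • (H * (S * Sᵀ) * Hᵀ) + Rh * Rhᵀ)
    (hX : X * Xᵀ = Re) (hXinv : IsUnit X.det)
    (Kp : Matrix (Fin n) (Fin m) ℝ)
    (hKp : Kp = F * (S * Sᵀ) * Hᵀ * Re⁻¹) :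
    Y * Yᵀ + Z * Zᵀ = F * (S * Sᵀ) * Fᵀ + G * (Qh * Qhᵀ) * Gᵀ ∧
      Z * Zᵀ = F * (S * Sᵀ) * Fᵀ + G * (Qh * Qhᵀ) * Gᵀ - lam • (Kp * Re * Kpᵀ) := by
  set A : Matrix (Fin m ⊕ Fin n) (Fin m ⊕ (Fin n ⊕ Fin q)) ℝ := (fromBlocks Rh (fromCols (Real.sqrt lam • (H * S)) 0)
            0 (fromCols (F * S) (G * Qh))) with hAdef
  have key : A * Aᵀ = (A * Qo) * (A * Qo)ᵀ := by
    rw [Matrix.transpose_mul, ← Matrix.mul_assoc, Matrix.mul_assoc A Qo, hQo,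
      Matrix.mul_one]
  rw [hA, hAdef] at key
  simp only [fromBlocks_transpose, transpose_fromCols, fromBlocks_multiply,
    fromCols_mul_fromRows, transpose_smul, transpose_mul, transpose_zero,
    Matrix.mul_zero, Matrix.zero_mul, add_zero, zero_add, Matrix.smul_mul,
    Matrix.mul_smul, smul_smul] at key
  rw [fromBlocks_inj] at key
  obtain ⟨h11, h12, h21, h22⟩ := key
  have hP : Sᵀᵀ = S := transpose_transpose S
  have hXTinv : IsUnit Xᵀ.det := by rwa [Matrix.det_transpose]
  have hReinv : IsUnit Re.det := by
    rw [← hX, Matrix.det_mul, Matrix.det_transpose]; exact hXinv.mul hXinv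
  have hResym : Reᵀ = Re := by rw [← hX]; simp
  have hReinvT : (Re⁻¹)ᵀ = Re⁻¹ := by rw [Matrix.transpose_nonsing_inv, hResym]
  have h1 : Y * Yᵀ + Z * Zᵀ = F * (S * Sᵀ) * Fᵀ + G * (Qh * Qhᵀ) * Gᵀ := by
    rw [← h22]; simp only [Matrix.mul_assoc]
  refine ⟨h1, ?_⟩
  have hY : Y = Real.sqrt lam • (F * (S * Sᵀ) * Hᵀ) * Xᵀ⁻¹ := by
    have := congrArg (· * Xᵀ⁻¹) h21.symm
    simpa [Matrix.mul_assoc, Matrix.mul_nonsing_inv _ hXTinv, Matrix.mul_smul,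
      Matrix.smul_mul] using this
  have hinv : ∀ M : Matrix (Fin m) (Fin n) ℝ, Xᵀ⁻¹ * (Xᵀ⁻¹ᵀ * M) = Re⁻¹ * M := by
    intro M
    rw [← Matrix.mul_assoc, Matrix.transpose_nonsing_inv, transpose_transpose,
      ← Matrix.mul_inv_rev, hX]
  have hs : Real.sqrt lam * Real.sqrt lam = lam := Real.mul_self_sqrt hlam.le
  have hYY : Y * Yᵀ = lam • (F * (S * Sᵀ) * Hᵀ * Re⁻¹ * (H * (S * Sᵀ) * Fᵀ)) := by
    rw [hY]
    simp only [Matrix.transpose_mul, Matrix.transpose_smul, Matrix.smul_mul,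
      Matrix.mul_smul, smul_smul, hs, transpose_transpose, Matrix.mul_assoc, hinv]
  have hinv2 : ∀ M : Matrix (Fin m) (Fin n) ℝ, Re⁻¹ * (Re * M) = M := by
    intro M
    rw [← Matrix.mul_assoc, Matrix.nonsing_inv_mul _ hReinv, Matrix.one_mul]
  have hKK : lam • (Kp * Re * Kpᵀ) = Y * Yᵀ := by
    rw [hYY, hKp]
    simp only [Matrix.transpose_mul, hReinvT, transpose_transpose,
      Matrix.mul_assoc, hinv2]
  rw [← h1, hKK]; abel
end

section
/- Extended array residual block: if an orthogonal 𝒬 block-triangularizes the first two block rows of the extended pre-array (with third row [−√λ yᵀ R^{−T/2}, x̂ᵀ S^{−T}, 0]), yielding third-row blocks (αᵀ, βᵀ, γ), then X α = −√λ (y − H x̂), where X is the (1,1) post-array block satisfying X Xᵀ = R_e^λ; hence if X is invertible, α = −√λ X⁻¹ e with e = y − H x̂. -/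
open Matrix

theorem extended_array_residual_block {n m q : ℕ}
    (S F : Matrix (Fin n) (Fin n) ℝ) (Rh : Matrix (Fin m) (Fin m) ℝ)
    (Qh : Matrix (Fin q) (Fin q) ℝ) (H : Matrix (Fin m) (Fin n) ℝ)
    (G : Matrix (Fin n) (Fin q) ℝ) (lam : ℝ) (hlam : 0 < lam)
    (hS : IsUnit S.det) (hRh : IsUnit Rh.det)
    (y : Matrix (Fin 1) (Fin m) ℝ) (xh : Matrix (Fin 1) (Fin n) ℝ)
    (Qo : Matrix (Fin m ⊕ (Fin n ⊕ Fin q)) (Fin m ⊕ (Fin n ⊕ Fin q)) ℝ)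
    (hQo : Qo * Qoᵀ = 1)
    (X : Matrix (Fin m) (Fin m) ℝ) (Y : Matrix (Fin n) (Fin m) ℝ)
    (Z : Matrix (Fin n) (Fin n) ℝ)
    (alph : Matrix (Fin 1) (Fin m) ℝ) (beta : Matrix (Fin 1) (Fin n) ℝ)
    (gam : Matrix (Fin 1) (Fin q) ℝ)
    (hA : (fromRows
            (fromRows
              (fromCols Rh (fromCols (Real.sqrt lam • (H * S)) 0))
              (fromCols 0 (fromCols (F * S) (G * Qh))))
            (fromCols (-(Real.sqrt lam) • (y * Rhᵀ⁻¹))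
              (fromCols (xh * Sᵀ⁻¹) 0))) * Qo
          = fromRows
              (fromRows
                (fromCols X (fromCols 0 0))
                (fromCols Y (fromCols Z 0)))
              (fromCols alph (fromCols beta gam)))
    (hX : X * Xᵀ = lam • (H * (S * Sᵀ) * Hᵀ) + Rh * Rhᵀ) :
    alph * Xᵀ = -(Real.sqrt lam) • (y - xh * Hᵀ) ∧
      (IsUnit X.det → alph = -(Real.sqrt lam) • ((y - xh * Hᵀ) * X⁻¹ᵀ)) := by
  set A := (fromRows
            (fromRows
              (fromCols Rh (fromCols (Real.sqrt lam • (H * S)) 0))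
              (fromCols 0 (fromCols (F * S) (G * Qh))))
            (fromCols (-(Real.sqrt lam) • (y * Rhᵀ⁻¹))
              (fromCols (xh * Sᵀ⁻¹) 0))) with hAdef
  set B := (fromRows
              (fromRows
                (fromCols X (fromCols 0 0))
                (fromCols Y (fromCols Z 0)))
              (fromCols alph (fromCols beta gam))) with hBdef
  have hBB : A * Aᵀ = B * Bᵀ := by
    rw [← hA, transpose_mul, ← Matrix.mul_assoc, Matrix.mul_assoc A Qo Qoᵀ, hQo, Matrix.mul_one]
  have key : toRows₂ (toCols₁ (toCols₁ (A * Aᵀ)))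
      = toRows₂ (toCols₁ (toCols₁ (B * Bᵀ))) := by rw [hBB]
  rw [hAdef, hBdef] at key
  simp only [transpose_fromRows, transpose_fromCols, fromRows_mul, mul_fromCols,
    fromCols_mul_fromRows, toRows₂_fromRows, toCols₁_fromCols,
    transpose_smul, transpose_mul, transpose_zero, transpose_neg, Matrix.mul_zero,
    Matrix.zero_mul, add_zero, zero_add, Matrix.smul_mul, Matrix.mul_smul,
    Matrix.neg_mul, Matrix.mul_neg, neg_smul] at key
  have hRhT : Rhᵀ⁻¹ * Rhᵀ = 1 := nonsing_inv_mul _ (by simpa using hRh)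
  have hST : Sᵀ⁻¹ * Sᵀ = 1 := nonsing_inv_mul _ (by simpa using hS)
  have h1 : alph * Xᵀ = -(Real.sqrt lam) • (y - xh * Hᵀ) := by
    rw [← key, Matrix.mul_assoc y Rhᵀ⁻¹ Rhᵀ, hRhT, Matrix.mul_one,
      ← Matrix.mul_assoc (xh * Sᵀ⁻¹) Sᵀ Hᵀ, Matrix.mul_assoc xh Sᵀ⁻¹ Sᵀ, hST, Matrix.mul_one,
      smul_sub]
    simp only [neg_smul, sub_neg_eq_add, neg_add_rev]
  refine ⟨h1, fun hXd => ?_⟩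
  have hXT : IsUnit Xᵀ.det := by simpa using hXd
  have := congrArg (fun M => M * Xᵀ⁻¹) h1
  simp only [Matrix.mul_assoc, mul_nonsing_inv _ hXT, Matrix.mul_one] at this
  rw [this, transpose_nonsing_inv, Matrix.smul_mul]
end

section
/- Positive semidefiniteness of the a priori IMCC-KF updated covariance: if P, Q, R are positive semidefinite (P, R positive definite) and 0 < λ ≤ 1, then F P Fᵀ + G Q Gᵀ − λ F P Hᵀ (λ H P Hᵀ + R)⁻¹ H P Fᵀ is positive semidefinite. -/
open Matrix

lemma posSemidef_fromBlocks_diag {n m : Type*} [Fintype n] [Fintype m]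
    {A : Matrix n n ℝ} {D : Matrix m m ℝ} (hA : A.PosSemidef) (hD : D.PosSemidef) :
    (fromBlocks A 0 0 D).PosSemidef := by
  rw [posSemidef_iff_dotProduct_mulVec] at *
  constructor
  · rw [isHermitian_fromBlocks_iff]
    exact ⟨hA.1, by simp, by simp, hD.1⟩
  · intro x
    have := hA.2 (x ∘ Sum.inl)
    have := hD.2 (x ∘ Sum.inr)
    simp only [fromBlocks_mulVec, zero_mulVec, add_zero, zero_add, dotProduct,
      Fintype.sum_sum_type] at *
    positivity

theorem apriori_imcckf_cov_psd {n m q : ℕ}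
    (P F : Matrix (Fin n) (Fin n) ℝ) (R : Matrix (Fin m) (Fin m) ℝ)
    (Q : Matrix (Fin q) (Fin q) ℝ) (H : Matrix (Fin m) (Fin n) ℝ)
    (G : Matrix (Fin n) (Fin q) ℝ) (lam : ℝ)
    (hP : P.PosDef) (hR : R.PosDef) (hQ : Q.PosSemidef)
    (hlam0 : 0 < lam) (hlam1 : lam ≤ 1) :
    (F * P * Fᵀ + G * Q * Gᵀ
      - lam • (F * P * Hᵀ * (lam • (H * P * Hᵀ) + R)⁻¹ * (H * P * Fᵀ))).PosSemidef := by
  classical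
  set s := Real.sqrt lam with hs
  have hs2 : s * s = lam := Real.mul_self_sqrt hlam0.le
  have hPt : Pᵀ = P := hP.1
  have hS : (lam • (H * P * Hᵀ) + R).PosDef := by
    refine Matrix.PosDef.posSemidef_add ?_ hR
    have h1 : lam • (H * P * Hᵀ) = (s • H) * P * (s • H)ᴴ := by
      simp only [conjTranspose_smul, star_trivial, Matrix.smul_mul, Matrix.mul_smul,
        smul_smul, hs2]
      rfl
    rw [h1]
    exact hP.posSemidef.mul_mul_conjTranspose_same _
  haveI := hS.isUnit.invertible
  set B : Matrix (Fin n) (Fin m) ℝ := s • (F * P * Hᵀ) with hB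
  have hBH : Bᴴ = s • (H * P * Fᵀ) := by
    simp [hB, Matrix.conjTranspose_mul, Matrix.mul_assoc, hPt]
  have hgoal : F * P * Fᵀ + G * Q * Gᵀ
      - lam • (F * P * Hᵀ * (lam • (H * P * Hᵀ) + R)⁻¹ * (H * P * Fᵀ))
      = (F * P * Fᵀ + G * Q * Gᵀ) - B * (lam • (H * P * Hᵀ) + R)⁻¹ * Bᴴ := by
    rw [hBH, hB, Matrix.smul_mul, Matrix.smul_mul, Matrix.mul_smul, smul_smul, hs2]
  rw [hgoal, ← Matrix.PosDef.fromBlocks₂₂ _ _ hS]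
  have hL : fromRows F (s • H) * P * (fromRows F (s • H))ᴴ
      = fromBlocks (F * P * Fᵀ) B Bᴴ (lam • (H * P * Hᵀ)) := by
    rw [conjTranspose_fromRows_eq_fromCols_conjTranspose, Matrix.fromRows_mul,
      fromRows_mul_fromCols, hBH, hB]
    simp only [conjTranspose_smul, star_trivial, Matrix.smul_mul, Matrix.mul_smul,
      smul_smul, hs2, Matrix.mul_assoc]
    rfl
  have hsplit : fromBlocks (F * P * Fᵀ + G * Q * Gᵀ) B Bᴴ (lam • (H * P * Hᵀ) + R)
      = fromBlocks (F * P * Fᵀ) B Bᴴ (lam • (H * P * Hᵀ)) + fromBlocks (G * Q * Gᵀ) 0 0 R := by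
    rw [Matrix.fromBlocks_add]
    simp
  rw [hsplit, ← hL]
  exact (hP.posSemidef.mul_mul_conjTranspose_same _).add
    (posSemidef_fromBlocks_diag (hQ.mul_mul_conjTranspose_same G) hR.posSemidef)
end
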